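/- Let P ∈ ℂ[t] with P(0) = 0, P nonconstant. An element of R_2(P) is a unit if and only if it is of the form t^i·(f + g√P) where i ∈ ℤ, f, g ∈ ℂ[t], and f² - g²·P = c·t^k for some c ∈ ℂ* and k ∈ ℤ≥0. -/

import Mathlib

open Polynomial

/-- The defining ideal of `R_2(P) = ℂ[t,t⁻¹,u]/(u² - P(t))`. -/
noncomputable abbrev R2ideal (P : Polynomial ℂ) : Ideal (Polynomial (LaurentPolynomial ℂ)) :=
  Ideal.span {(X : Polynomial (LaurentPolynomial ℂ)) ^ 2 - C (Polynomial.toLaurent P)}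

/-- `R_2(P) = ℂ[t,t⁻¹,u]/(u² - P(t))`. -/
abbrev R2P (P : Polynomial ℂ) : Type :=
  Polynomial (LaurentPolynomial ℂ) ⧸ R2ideal P

/-- Units of Laurent polynomials over ℂ are `c • T n`. -/
lemma laurent_unit_form {a : LaurentPolynomial ℂ} (h : IsUnit a) :
    ∃ (c : ℂ) (n : ℤ), c ≠ 0 ∧ a = LaurentPolynomial.C c * LaurentPolynomial.T n := by
  obtain ⟨b, hb⟩ := h.exists_right_inv
  obtain ⟨m, f, hf⟩ := a.exists_T_pow
  obtain ⟨n, g, hg⟩ := b.exists_T_pow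
  have hfg : f * g = X ^ (m + n) := by
    apply Polynomial.toLaurent_injective
    rw [map_mul, hf, hg, Polynomial.toLaurent_X_pow]
    push_cast
    rw [mul_mul_mul_comm, hb, one_mul, ← LaurentPolynomial.T_add]
  have hdvd : f ∣ X ^ (m + n) := ⟨g, hfg.symm⟩
  obtain ⟨i, hi, u, hu⟩ := (dvd_prime_pow Polynomial.prime_X (m + n)).1 hdvd
  obtain ⟨c, hc, hcu⟩ := Polynomial.isUnit_iff.1 u.isUnit
  have hc0 : c ≠ 0 := hc.ne_zero
  refine ⟨c⁻¹, (i : ℤ) - m, inv_ne_zero hc0, ?_⟩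
  have h1 : a * LaurentPolynomial.T (m : ℤ) * LaurentPolynomial.C c
      = LaurentPolynomial.T (i : ℤ) := by
    calc a * LaurentPolynomial.T (m : ℤ) * LaurentPolynomial.C c
        = Polynomial.toLaurent f * Polynomial.toLaurent (Polynomial.C c) := by
          rw [hf, Polynomial.toLaurent_C]
      _ = Polynomial.toLaurent (f * ↑u) := by rw [← map_mul, hcu]
      _ = LaurentPolynomial.T (i : ℤ) := by rw [hu, Polynomial.toLaurent_X_pow]
  have hTm : (LaurentPolynomial.T ((m : ℤ)) : LaurentPolynomial ℂ) * LaurentPolynomial.T (-(m : ℤ)) = 1 := by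
    rw [← LaurentPolynomial.T_add]; simp
  have hTi : (LaurentPolynomial.T ((i : ℤ)) : LaurentPolynomial ℂ) * LaurentPolynomial.T (-(m : ℤ))
      = LaurentPolynomial.T ((i : ℤ) - m) := by
    rw [← LaurentPolynomial.T_add]; ring_nf
  have hCc : (LaurentPolynomial.C c⁻¹ : LaurentPolynomial ℂ) * LaurentPolynomial.C c = 1 := by
    rw [← map_mul, inv_mul_cancel₀ hc0, map_one]
  calc a = LaurentPolynomial.C c⁻¹ * LaurentPolynomial.C c * a
        * (LaurentPolynomial.T (m : ℤ) * LaurentPolynomial.T (-(m : ℤ))) := by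
          rw [hCc, hTm]; ring
    _ = LaurentPolynomial.C c⁻¹ * ((a * LaurentPolynomial.T (m : ℤ) * LaurentPolynomial.C c)
        * LaurentPolynomial.T (-(m : ℤ))) := by ring
    _ = LaurentPolynomial.C c⁻¹ * LaurentPolynomial.T ((i : ℤ) - m) := by rw [h1, hTi]

/-- For nonconstant `P` with `P(0) = 0` (and `R_2(P)` a domain), an element of
`R_2(P)` is a unit iff it is of the form `tⁱ(f + g√P)` with `f, g ∈ ℂ[t]` and
`f² - g²P = c·t^k`, `c ∈ ℂ*`, `k ≥ 0`. -/
theorem stmt_12 (P : Polynomial ℂ) (hP : P.natDegree ≠ 0) (h0 : P.eval 0 = 0)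
    (hdom : IsDomain (R2P P)) (z : R2P P) :
    IsUnit z ↔
      ∃ (i : ℤ) (f g : Polynomial ℂ) (c : ℂ) (k : ℕ),
        c ≠ 0 ∧ f ^ 2 - g ^ 2 * P = C c * X ^ k ∧
        z = Ideal.Quotient.mk (R2ideal P) (C (LaurentPolynomial.T i)) *
          Ideal.Quotient.mk (R2ideal P) (C (Polynomial.toLaurent f) +
            C (Polynomial.toLaurent g) * X) := by
  set L := LaurentPolynomial ℂ
  set P' : L := Polynomial.toLaurent P with hP'
  set M : Polynomial L := X ^ 2 - C P' with hM
  set mk : Polynomial L →+* R2P P := Ideal.Quotient.mk (R2ideal P) with hmk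
  have hMmonic : M.Monic := monic_X_pow_sub_C P' two_ne_zero
  have hMdeg : M.degree = 2 := degree_X_pow_sub_C (by norm_num) P'
  have hX2 : mk (X ^ 2) = mk (C P') := by
    rw [Ideal.Quotient.mk_eq_mk_iff_sub_mem]
    exact Ideal.subset_span (Set.mem_singleton _)
  -- uniqueness of degree < 2 representatives
  have huniq : ∀ p q : Polynomial L, p.degree < 2 → q.degree < 2 → mk p = mk q → p = q := by
    intro p q hp hq hpq
    have hmem : p - q ∈ R2ideal P := (Ideal.Quotient.mk_eq_mk_iff_sub_mem p q).1 hpq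
    have hdvd : M ∣ p - q := (Ideal.mem_span_singleton).1 hmem
    by_contra hne
    have hsub : p - q ≠ 0 := sub_ne_zero.2 hne
    have := Polynomial.degree_le_of_dvd hdvd hsub
    have hlt : (p - q).degree < 2 := lt_of_le_of_lt (degree_sub_le p q) (max_lt hp hq)
    rw [hMdeg] at this
    exact absurd (lt_of_le_of_lt this hlt) (lt_irrefl _)
  -- unit of form C a for Laurent unit a
  have hCunit : ∀ a : L, IsUnit a → IsUnit (mk (C a)) := by
    intro a ha
    obtain ⟨b, hb⟩ := ha.exists_right_inv
    have hab : mk (C a) * mk (C b) = 1 := by rw [← map_mul, ← map_mul, hb, map_one, map_one]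
    have hba : mk (C b) * mk (C a) = 1 := by rw [← map_mul, ← map_mul, mul_comm b, hb, map_one, map_one]
    exact ⟨⟨mk (C a), mk (C b), hab, hba⟩, rfl⟩
  constructor
  · -- forward direction
    intro hz
    obtain ⟨q₀, hq₀⟩ := Ideal.Quotient.mk_surjective z
    obtain ⟨w, hw⟩ := hz.exists_right_inv
    obtain ⟨r₀, hr₀⟩ := Ideal.Quotient.mk_surjective w
    set q : Polynomial L := q₀ %ₘ M with hqdef
    set r : Polynomial L := r₀ %ₘ M with hrdef
    have hq : mk q = z := by
      rw [← hq₀, hqdef, Ideal.Quotient.mk_eq_mk_iff_sub_mem]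
      apply Ideal.mem_span_singleton.2
      refine ⟨-(q₀ /ₘ M), ?_⟩
      rw [Polynomial.modByMonic_eq_sub_mul_div _ M]; ring
    have hr : mk r = w := by
      rw [← hr₀, hrdef, Ideal.Quotient.mk_eq_mk_iff_sub_mem]
      apply Ideal.mem_span_singleton.2
      refine ⟨-(r₀ /ₘ M), ?_⟩
      rw [Polynomial.modByMonic_eq_sub_mul_div _ M]; ring
    have hle : ∀ p : Polynomial L, p.degree < 2 → p.degree ≤ 1 := by
      intro p h
      by_cases hp0 : p = 0
      · rw [hp0, Polynomial.degree_zero]; exact bot_le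
      · have h2 : p.natDegree < 2 := by
          rw [Polynomial.natDegree_lt_iff_degree_lt hp0]
          exact_mod_cast h
        have h3 : p.natDegree ≤ 1 := by omega
        exact_mod_cast Polynomial.natDegree_le_iff_degree_le.1 h3
    have hqdeg : q.degree < 2 := hMdeg ▸ Polynomial.degree_modByMonic_lt q₀ hMmonic
    have hrdeg : r.degree < 2 := hMdeg ▸ Polynomial.degree_modByMonic_lt r₀ hMmonic
    set a : L := q.coeff 0
    set b : L := q.coeff 1
    set u : L := r.coeff 0
    set v : L := r.coeff 1
    have hqrep : q = C b * X + C a := eq_X_add_C_of_degree_le_one (hle _ hqdeg)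
    have hrrep : r = C v * X + C u := eq_X_add_C_of_degree_le_one (hle _ hrdeg)
    have hone : mk (C (a * v + b * u) * X + C (a * u + b * v * P')) = 1 := by
      have h1 : mk (q * r) = 1 := by rw [map_mul, hq, hr, hw]
      rw [← h1, Ideal.Quotient.mk_eq_mk_iff_sub_mem]
      apply Ideal.mem_span_singleton.2
      refine ⟨-(C (b * v)), ?_⟩
      rw [hqrep, hrrep]
      push_cast [map_add, map_mul]
      ring
    have heq : C (a * v + b * u) * X + C (a * u + b * v * P') = 1 := by
      apply huniq _ _ (lt_of_le_of_lt degree_linear_le (by norm_num)) _ hone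
      rw [Polynomial.degree_one]
      norm_num
    have h1c : a * v + b * u = 0 := by
      have := congrArg (fun p => Polynomial.coeff p 1) heq
      simpa [Polynomial.coeff_one] using this
    have h0c : a * u + b * v * P' = 1 := by
      have := congrArg (fun p => Polynomial.coeff p 0) heq
      simpa [Polynomial.coeff_one] using this
    have hnorm : (a ^ 2 - b ^ 2 * P') * (u ^ 2 - v ^ 2 * P') = 1 := by
      linear_combination (a * u + b * v * P' + 1) * h0c - (a * v + b * u) * P' * h1c
    obtain ⟨c₀, n₀, hc₀, hform⟩ := laurent_unit_form (IsUnit.of_mul_eq_one _ hnorm)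
    obtain ⟨na, f₀, hf₀⟩ := a.exists_T_pow
    obtain ⟨nb, g₀, hg₀⟩ := b.exists_T_pow
    set N : ℕ := na + nb with hN
    set F : Polynomial ℂ := f₀ * X ^ nb with hFdef
    set G : Polynomial ℂ := g₀ * X ^ na with hGdef
    have hF : Polynomial.toLaurent F = a * LaurentPolynomial.T (N : ℤ) := by
      rw [hFdef, map_mul, hf₀, Polynomial.toLaurent_X_pow, mul_assoc, ← LaurentPolynomial.T_add]
      push_cast [hN]
      ring_nf
    have hG : Polynomial.toLaurent G = b * LaurentPolynomial.T (N : ℤ) := by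
      rw [hGdef, map_mul, hg₀, Polynomial.toLaurent_X_pow, mul_assoc, ← LaurentPolynomial.T_add]
      push_cast [hN]
      ring_nf
    have hT2 : (LaurentPolynomial.T (N : ℤ) : L) ^ 2 = LaurentPolynomial.T (2 * (N : ℤ)) :=
      LaurentPolynomial.T_pow _ _
    have hFG : Polynomial.toLaurent (F ^ 2 - G ^ 2 * P)
        = LaurentPolynomial.C c₀ * LaurentPolynomial.T (n₀ + 2 * (N : ℤ)) := by
      have : Polynomial.toLaurent (F ^ 2 - G ^ 2 * P)
          = (a ^ 2 - b ^ 2 * P') * (LaurentPolynomial.T (N : ℤ)) ^ 2 := by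
        rw [map_sub, map_mul, map_pow, map_pow, hF, hG, ← hP']
        ring
      rw [this, hT2, hform, mul_assoc, ← LaurentPolynomial.T_add]
    have hk0 : 0 ≤ n₀ + 2 * (N : ℤ) := by
      by_contra hneg
      push_neg at hneg
      set j : ℕ := (-(n₀ + 2 * (N : ℤ))).toNat with hj
      have hj0 : j ≠ 0 := by
        rw [hj]
        omega
      have : Polynomial.toLaurent ((F ^ 2 - G ^ 2 * P) * X ^ j)
          = Polynomial.toLaurent (Polynomial.C c₀) := by
        rw [map_mul, Polynomial.toLaurent_X_pow, hFG, Polynomial.toLaurent_C, mul_assoc,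
          ← LaurentPolynomial.T_add]
        have : n₀ + 2 * (N : ℤ) + (j : ℤ) = 0 := by rw [hj]; omega
        rw [this, LaurentPolynomial.T_zero, mul_one]
      have heval := congrArg (fun p => Polynomial.eval 0 p) (Polynomial.toLaurent_injective this)
      simp [Polynomial.eval_mul, zero_pow hj0] at heval
      exact hc₀ heval.symm
    set k : ℕ := (n₀ + 2 * (N : ℤ)).toNat with hk
    have hkey : F ^ 2 - G ^ 2 * P = C c₀ * X ^ k := by
      apply Polynomial.toLaurent_injective
      rw [hFG, map_mul, Polynomial.toLaurent_C, Polynomial.toLaurent_X_pow]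
      congr 1
      rw [hk]
      congr 1
      omega
    refine ⟨-(N : ℤ), F, G, c₀, k, hc₀, hkey, ?_⟩
    have hT1 : (LaurentPolynomial.T (-(N : ℤ)) : L) * LaurentPolynomial.T (N : ℤ) = 1 := by
      rw [← LaurentPolynomial.T_add]
      simp
    have hpoly : C (LaurentPolynomial.T (-(N : ℤ)) : L) *
        (C (Polynomial.toLaurent F) + C (Polynomial.toLaurent G) * X) = C b * X + C a := by
      rw [hF, hG]
      have ha' : (LaurentPolynomial.T (-(N : ℤ)) : L) * (a * LaurentPolynomial.T (N : ℤ)) = a := by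
        rw [mul_comm a, ← mul_assoc, hT1, one_mul]
      have hb' : (LaurentPolynomial.T (-(N : ℤ)) : L) * (b * LaurentPolynomial.T (N : ℤ)) = b := by
        rw [mul_comm b, ← mul_assoc, hT1, one_mul]
      rw [mul_add, ← map_mul, ha', ← mul_assoc, ← map_mul, hb']
      ring
    rw [← map_mul, hpoly, ← hq, hqrep]
  · -- backward direction
    rintro ⟨i, f, g, c, k, hc, hfg, hz⟩
    rw [hz]
    apply IsUnit.mul
    · exact hCunit _ (LaurentPolynomial.isUnit_T i)
    · -- (Cf + Cg X)(Cf - Cg X) ≡ C (toLaurent (f² - g²P)) = C (C c * T k), a unit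
      have hprod : mk (C (Polynomial.toLaurent f) + C (Polynomial.toLaurent g) * X) *
          mk (C (Polynomial.toLaurent f) - C (Polynomial.toLaurent g) * X) =
          mk (C (Polynomial.toLaurent (f ^ 2 - g ^ 2 * P))) := by
        rw [← map_mul, Ideal.Quotient.mk_eq_mk_iff_sub_mem]
        apply Ideal.mem_span_singleton.2
        refine ⟨-(C (Polynomial.toLaurent g)) ^ 2, ?_⟩
        have h2 : Polynomial.toLaurent (f ^ 2 - g ^ 2 * P)
            = Polynomial.toLaurent f ^ 2 - Polynomial.toLaurent g ^ 2 * P' := by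
          simp [hP']
        rw [h2, map_sub, map_mul, map_pow, map_pow]
        ring
      have hunit : IsUnit (mk (C (Polynomial.toLaurent (f ^ 2 - g ^ 2 * P)))) := by
        apply hCunit
        rw [hfg, map_mul, Polynomial.toLaurent_C, Polynomial.toLaurent_X_pow]
        exact (isUnit_iff_exists_inv.2 ⟨LaurentPolynomial.C c⁻¹, by
          rw [← map_mul, mul_inv_cancel₀ hc, map_one]⟩).mul (LaurentPolynomial.isUnit_T _)
      rw [← hprod] at hunit
      obtain ⟨w', hw'⟩ := hunit.exists_right_inv
      obtain ⟨p, hp⟩ := Ideal.Quotient.mk_surjective w'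
      rw [← hmk] at hp
      subst hp
      refine ⟨⟨_, _ * mk p, by rw [← mul_assoc]; exact hw', ?_⟩, rfl⟩
      rw [← map_mul, ← map_mul] at hw' ⊢
      convert hw' using 2
      ring
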